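/- arXiv:1506.03895 — 2 statements merged into one kernel-verified Lean document; each statement's English description precedes it below -/
import Mathlib

section
/- Let X be a first countable topological space, Φ a set of homeomorphisms of X acting on X, and f : X → Φ\X the quotient map. Then a sequence y_i converges to y in Φ\X if and only if there exist x_i → x in X with f(x_i) = y_i (for all sufficiently large i) and f(x) = y. -/
open Filter Topology Set

def stmt2Rel {X : Type*} [TopologicalSpace X] (Φ : Set (X ≃ₜ X)) : X → X → Prop :=
  fun x y => ∃ φ ∈ Φ, φ x = y

theorem stmt2Aux {X : Type*} [TopologicalSpace X] [FirstCountableTopology X]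
    (Φ : Set (X ≃ₜ X))
    (y : ℕ → Quot (stmt2Rel Φ))
    (l : Quot (stmt2Rel Φ)) :
    Filter.Tendsto y Filter.atTop (nhds l) ↔
      ∃ (x : ℕ → X) (p : X), Filter.Tendsto x Filter.atTop (nhds p) ∧
        (∀ᶠ i in Filter.atTop, Quot.mk (stmt2Rel Φ) (x i) = y i) ∧
        Quot.mk (stmt2Rel Φ) p = l := by
  classical
  constructor
  · intro hy
    have key : ∀ a b : X, Relation.EqvGen (stmt2Rel Φ) a b →
        ∃ ψ : X ≃ₜ X, ψ a = b ∧ ∀ z, Quot.mk (stmt2Rel Φ) z = Quot.mk (stmt2Rel Φ) (ψ z) := by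
      intro a b h
      induction h with
      | rel a b hab =>
        obtain ⟨φ, hφ, hab⟩ := hab
        exact ⟨φ, hab, fun z => Quot.sound ⟨φ, hφ, rfl⟩⟩
      | refl a => exact ⟨Homeomorph.refl X, rfl, fun z => rfl⟩
      | symm a b h ih =>
        obtain ⟨ψ, hψ, hq⟩ := ih
        refine ⟨ψ.symm, by rw [← hψ]; exact ψ.symm_apply_apply a, fun z => ?_⟩
        conv_lhs => rw [← ψ.apply_symm_apply z]
        exact (hq (ψ.symm z)).symm
      | trans a b c h1 h2 ih1 ih2 =>
        obtain ⟨ψ1, hψ1, hq1⟩ := ih1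
        obtain ⟨ψ2, hψ2, hq2⟩ := ih2
        exact ⟨ψ1.trans ψ2, by simp [hψ1, hψ2], fun z => (hq1 z).trans (hq2 (ψ1 z))⟩
    -- the quotient map is open
    have hopen : IsOpenMap (Quot.mk (stmt2Rel Φ)) := by
      intro U hUo
      rw [← isQuotientMap_quot_mk.isOpen_preimage]
      rw [isOpen_iff_forall_mem_open]
      rintro z hz
      obtain ⟨u, hu, huz⟩ := hz
      obtain ⟨ψ, hψ, hq⟩ := key u z (Quot.eq.mp huz)
      refine ⟨ψ '' U, ?_, ψ.isOpenMap U hUo, ⟨u, hu, hψ⟩⟩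
      rintro w ⟨u', hu', rfl⟩
      exact ⟨u', hu', hq u'⟩
    obtain ⟨p, hp⟩ := Quot.exists_rep l
    obtain ⟨U, hU⟩ := (nhds p).exists_antitone_basis
    have himg : ∀ n, Quot.mk (stmt2Rel Φ) '' U n ∈ 𝓝 l := by
      intro n
      have h1 : U n ∈ 𝓝 p := hU.mem n
      have h3 : p ∈ interior (U n) := mem_interior_iff_mem_nhds.mpr h1
      refine Filter.mem_of_superset ((hopen _ isOpen_interior).mem_nhds ⟨p, h3, hp⟩) ?_
      exact Set.image_mono interior_subset
    have hev : ∀ n, ∃ m, ∀ i ≥ m, y i ∈ Quot.mk (stmt2Rel Φ) '' U n := fun n =>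
      Filter.eventually_atTop.mp (hy (himg n))
    choose N' hN' using hev
    obtain ⟨N, hNmono, hNN'⟩ : ∃ N : ℕ → ℕ, StrictMono N ∧ ∀ n, N' n ≤ N n := by
      refine ⟨fun n => Nat.rec (motive := fun _ => ℕ) (N' 0) (fun k ih => max (N' (k + 1)) (ih + 1)) n, ?_, ?_⟩
      · exact strictMono_nat_of_lt_succ fun n =>
          lt_of_lt_of_le (Nat.lt_succ_self _) (le_max_right _ _)
      · intro n
        match n with
        | 0 => exact le_refl _
        | k + 1 => exact le_max_left _ _
    let m : ℕ → ℕ := fun i => Nat.findGreatest (P := fun n => N n ≤ i) i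
    have hx : ∀ i, ∃ u : X, N 0 ≤ i → u ∈ U (m i) ∧ Quot.mk (stmt2Rel Φ) u = y i := by
      intro i
      by_cases hi : N 0 ≤ i
      · have hm : N (m i) ≤ i :=
          Nat.findGreatest_spec (P := fun n => N n ≤ i) (Nat.zero_le i) hi
        obtain ⟨u, hu, huy⟩ := hN' (m i) i (le_trans (hNN' _) hm)
        exact ⟨u, fun _ => ⟨hu, huy⟩⟩
      · exact ⟨p, fun h => absurd h hi⟩
    choose x hxs using hx
    refine ⟨x, p, ?_, ?_, hp⟩
    · rw [hU.toHasBasis.tendsto_right_iff]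
      intro n _
      filter_upwards [Filter.eventually_ge_atTop (max (N 0) (N n))] with i hi
      have hi0 : N 0 ≤ i := le_trans (le_max_left _ _) hi
      have hin : N n ≤ i := le_trans (le_max_right _ _) hi
      have hni : n ≤ i := le_trans (hNmono.id_le n) hin
      have hnm : n ≤ m i := Nat.le_findGreatest hni hin
      exact hU.antitone hnm ((hxs i hi0)).1
    · filter_upwards [Filter.eventually_ge_atTop (N 0)] with i hi
      exact (hxs i hi).2
  · rintro ⟨x, p, hx, hfx, hfp⟩
    have : Filter.Tendsto (fun i => Quot.mk (stmt2Rel Φ) (x i)) Filter.atTop (𝓝 l) := by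
      rw [← hfp]
      exact (continuous_quot_mk.tendsto p).comp hx
    exact this.congr' hfx

theorem stmt2 {X : Type*} [TopologicalSpace X] [FirstCountableTopology X]
    (Φ : Set (X ≃ₜ X))
    (y : ℕ → Quot (fun x y : X => ∃ φ ∈ Φ, φ x = y))
    (l : Quot (fun x y : X => ∃ φ ∈ Φ, φ x = y)) :
    Filter.Tendsto y Filter.atTop (nhds l) ↔
      ∃ (x : ℕ → X) (p : X), Filter.Tendsto x Filter.atTop (nhds p) ∧
        (∀ᶠ i in Filter.atTop, Quot.mk (fun x y : X => ∃ φ ∈ Φ, φ x = y) (x i) = y i) ∧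
        Quot.mk (fun x y : X => ∃ φ ∈ Φ, φ x = y) p = l := by
  exact stmt2Aux Φ y l
end

section
/- Let Ω ⊆ ℝⁿ be an open convex set containing 0, and let v : Ω → ℝ be a differentiable convex function with v ≥ −1, v < 0 on Ω, and such that for some ε, γ > 0 the sphere {|x| = ε} is contained in Ω and (1/ε)·x·∇v(x) > γ for all |x| = ε. Then Ω is contained in the ball of radius ε + 1/γ centered at 0. -/
theorem stmt17 (n : ℕ) (Ω : Set (EuclideanSpace ℝ (Fin n)))
    (hΩo : IsOpen Ω) (hΩc : Convex ℝ Ω) (h0 : (0 : EuclideanSpace ℝ (Fin n)) ∈ Ω)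
    (v : EuclideanSpace ℝ (Fin n) → ℝ)
    (hdiff : ∀ x ∈ Ω, DifferentiableAt ℝ v x)
    (hconv : ConvexOn ℝ Ω v)
    (hlb : ∀ x ∈ Ω, -1 ≤ v x) (hub : ∀ x ∈ Ω, v x < 0)
    (ε γ : ℝ) (hε : 0 < ε) (hγ : 0 < γ)
    (hsph : ∀ x : EuclideanSpace ℝ (Fin n), ‖x‖ = ε → x ∈ Ω)
    (hgrad : ∀ x : EuclideanSpace ℝ (Fin n), ‖x‖ = ε → γ < (1 / ε) * fderiv ℝ v x x) :
    Ω ⊆ Metric.ball 0 (ε + 1 / γ) := by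
  intro x hx
  rw [Metric.mem_ball, dist_zero_right]
  by_contra hcon
  push_neg at hcon
  have hxpos : (0:ℝ) < ‖x‖ := lt_of_lt_of_le (by positivity) hcon
  set y : EuclideanSpace ℝ (Fin n) := (ε / ‖x‖) • x with hy
  have hny : ‖y‖ = ε := by
    rw [hy, norm_smul, Real.norm_eq_abs, abs_of_pos (by positivity),
      div_mul_cancel₀ _ hxpos.ne']
  have hyΩ : y ∈ Ω := hsph y hny
  -- derivative bound at y
  have hDy : ε * γ < fderiv ℝ v y y := by
    have h := hgrad y hny
    rw [one_div] at h
    have h2 := mul_lt_mul_of_pos_left h hε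
    rwa [← mul_assoc, mul_inv_cancel₀ hε.ne', one_mul] at h2
  -- x - y = s • y with s = (‖x‖ - ε)/ε
  set s : ℝ := (‖x‖ - ε) / ε with hs
  have hspos : 0 < s := div_pos (by nlinarith [one_div_pos.mpr hγ]) hε
  have hxy : x - y = s • y := by
    rw [hy, hs, smul_smul]
    have : (‖x‖ - ε) / ε * (ε / ‖x‖) = 1 - ε / ‖x‖ := by
      field_simp
    rw [this, sub_smul, one_smul]
  -- line map g t = t • (x - y) + y
  have hmap : ∀ t : ℝ, (AffineMap.lineMap y x : ℝ →ᵃ[ℝ] EuclideanSpace ℝ (Fin n)) t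
      = t • (x - y) + y := by
    intro t; simp [AffineMap.lineMap_apply, vsub_eq_sub, vadd_eq_add]
  set f : ℝ → ℝ := fun t => v (t • (x - y) + y) with hf
  have hfeq : (v ∘ (AffineMap.lineMap y x : ℝ →ᵃ[ℝ] _)) = f := by
    funext t; simp [hf, Function.comp, hmap t]
  have hfconv : ConvexOn ℝ ((AffineMap.lineMap y x : ℝ →ᵃ[ℝ] _) ⁻¹' Ω) f :=
    hfeq ▸ hconv.comp_affineMap (AffineMap.lineMap y x)
  have h0m : (0:ℝ) ∈ (AffineMap.lineMap y x : ℝ →ᵃ[ℝ] _) ⁻¹' Ω := by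
    simp [Set.mem_preimage, hmap 0, hyΩ]
  have h1m : (1:ℝ) ∈ (AffineMap.lineMap y x : ℝ →ᵃ[ℝ] _) ⁻¹' Ω := by
    simp only [Set.mem_preimage, hmap 1, one_smul, sub_add_cancel]
    exact hx
  have hderiv : HasDerivAt f (fderiv ℝ v y (x - y)) 0 := by
    have hg : HasDerivAt (fun t : ℝ => t • (x - y) + y) (x - y) 0 := by
      simpa using ((hasDerivAt_id (0:ℝ)).smul_const (x - y)).add_const y
    have hv : HasFDerivAt v (fderiv ℝ v y) ((0:ℝ) • (x - y) + y) := by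
      simpa using (hdiff y hyΩ).hasFDerivAt
    exact (hv.comp_hasDerivAt 0 hg :)
  have hslope := hfconv.le_slope_of_hasDerivAt h0m h1m one_pos hderiv
  have hslope' : slope f 0 1 = v x - v y := by
    simp [slope_def_field, hf, sub_add_cancel]
  rw [hslope'] at hslope
  have hfd : fderiv ℝ v y (x - y) = s * fderiv ℝ v y y := by
    rw [hxy, map_smul, smul_eq_mul]
  have hxe : 1/γ ≤ ‖x‖ - ε := by linarith
  have h1 : 1 ≤ s * (ε * γ) := by
    rw [hs, div_mul_eq_mul_div, le_div_iff₀ hε]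
    calc 1*ε = (1/γ)*(ε*γ) := by field_simp
    _ ≤ (‖x‖-ε)*(ε*γ) := mul_le_mul_of_nonneg_right hxe (by positivity)
  have : 1 < v x - v y := by
    calc (1:ℝ) ≤ s * (ε * γ) := h1
    _ < s * fderiv ℝ v y y := by exact (mul_lt_mul_iff_right₀ hspos).mpr hDy
    _ = fderiv ℝ v y (x - y) := hfd.symm
    _ ≤ v x - v y := hslope
  linarith [hlb y hyΩ, hub x hx]
end
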